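/- Let (G = (V₁, V₂, E), Σ, π) be a projection game in which every vertex of V₁ ∪ V₂ has degree exactly d ≥ 1, Σ is nonempty, ℓ ≥ 1 is an integer, and (B, (C_x)_{x∈Σ}) is an (|Σ|, ℓ)-set system indexed by Σ. If the associated Set Cover instance has a set cover S with |S| < (ℓ/8)·(|V₁| + |V₂|), then there exists a labeling φ : V₁ ∪ V₂ → Σ that satisfies at least (2/ℓ²)·|E| edges of G. Equivalently, if every labeling satisfies fewer than (2/ℓ²)·|E| edges, then every set cover of the associated instance has size at least (ℓ/8)·(|V₁| + |V₂|). -/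

import Mathlib

/-- The sets of the Set Cover instance associated to a projection game
`(G = (V₁, V₂, E), A, π)` and a family `(C_x)_{x ∈ A}` of subsets of `B`. -/
def projSet {V₁ V₂ A B : Type} (E : Set (V₁ × V₂)) (π : V₁ × V₂ → A → A)
    (C : A → Set B) : (V₁ ⊕ V₂) × A → Set ((V₁ × V₂) × B)
  | (Sum.inl u, y) => {p | p.1 ∈ E ∧ p.1.1 = u ∧ p.2 ∉ C (π p.1 y)}
  | (Sum.inr v, x) => {p | p.1 ∈ E ∧ p.1.2 = v ∧ p.2 ∈ C x}

set_option maxHeartbeats 800000 in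
/-- Soundness of the Projection Games → Set Cover reduction: for a `d`-regular
projection game with an `(|A|, ℓ)`-set system, if the associated Set Cover
instance has a set cover of size `< (ℓ/8)(|V₁| + |V₂|)`, then some labeling
satisfies at least a `2/ℓ²` fraction of the edges. -/
theorem stmt_6 {V₁ V₂ A B : Type} [Fintype V₁] [Fintype V₂] [Fintype A]
    [Fintype B] [DecidableEq V₁] [DecidableEq V₂] [DecidableEq A] [Nonempty A]
    (E : Finset (V₁ × V₂)) (π : V₁ × V₂ → A → A) (C : A → Set B)
    (d ℓ : ℕ) (hd : 1 ≤ d) (hℓ : 1 ≤ ℓ)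
    (hreg₁ : ∀ u : V₁, (E.filter fun e => e.1 = u).card = d)
    (hreg₂ : ∀ v : V₂, (E.filter fun e => e.2 = v).card = d)
    -- `(B, (C_x)_{x ∈ A})` is an `(|A|, ℓ)`-set system:
    (hsys : ∀ P N : Finset A, P.card + N.card ≤ ℓ →
      ((⋃ x ∈ P, C x) ∪ ⋃ x ∈ N, (C x)ᶜ) = (Set.univ : Set B) →
      ∃ x ∈ P, x ∈ N)
    -- `S` is a set cover of the associated instance:
    (S : Finset ((V₁ ⊕ V₂) × A))
    (hcov : ∀ e ∈ E, ∀ b : B,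
      ∃ i ∈ S, ((e, b) : (V₁ × V₂) × B) ∈ projSet (↑E) π C i)
    (hsize : (S.card : ℝ) <
      (ℓ : ℝ) / 8 * ((Fintype.card V₁ + Fintype.card V₂ : ℕ) : ℝ)) :
    ∃ (φ₁ : V₁ → A) (φ₂ : V₂ → A),
      2 / (ℓ : ℝ) ^ 2 * (E.card : ℝ) ≤
        ((E.filter fun e => π e (φ₁ e.1) = φ₂ e.2).card : ℝ) := by
  classical
  set a₁ : V₁ → Finset A := fun u => (S.filter fun i => i.1 = Sum.inl u).image Prod.snd with ha₁
  set a₂ : V₂ → Finset A := fun v => (S.filter fun i => i.1 = Sum.inr v).image Prod.snd with ha₂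
  -- total candidate count
  have hSsum : (∑ u, (a₁ u).card) + (∑ v, (a₂ v).card) ≤ S.card := by
    have h := Finset.card_eq_sum_card_fiberwise
      (f := Prod.fst) (s := S) (t := (Finset.univ : Finset (V₁ ⊕ V₂)))
      (fun x _ => Finset.mem_univ _)
    rw [h, Fintype.sum_sum_type]
    gcongr with u _ v _ <;> exact Finset.card_image_le
  -- edge count
  have hE₁ : E.card = Fintype.card V₁ * d := by
    have h := Finset.card_eq_sum_card_fiberwise
      (f := Prod.fst) (s := E) (t := (Finset.univ : Finset V₁))
      (fun x _ => Finset.mem_univ _)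
    rw [h]
    simp [hreg₁, Finset.sum_const, mul_comm]
  have hE₂ : E.card = Fintype.card V₂ * d := by
    have h := Finset.card_eq_sum_card_fiberwise
      (f := Prod.snd) (s := E) (t := (Finset.univ : Finset V₂))
      (fun x _ => Finset.mem_univ _)
    rw [h]
    simp [hreg₂, Finset.sum_const, mul_comm]
  -- edge weight sum
  have hEdge : ∑ e ∈ E, ((a₁ e.1).card + (a₂ e.2).card)
      = d * ((∑ u, (a₁ u).card) + (∑ v, (a₂ v).card)) := by
    rw [Finset.sum_add_distrib]
    have h1 : ∑ e ∈ E, (a₁ e.1).card = d * ∑ u, (a₁ u).card := by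
      rw [← Finset.sum_fiberwise E Prod.fst (fun e => (a₁ e.1).card), Finset.mul_sum]
      refine Finset.sum_congr rfl fun u _ => ?_
      rw [Finset.sum_congr rfl (fun e he => by
        rw [(Finset.mem_filter.mp he).2]), Finset.sum_const, hreg₁, smul_eq_mul]
    have h2 : ∑ e ∈ E, (a₂ e.2).card = d * ∑ v, (a₂ v).card := by
      rw [← Finset.sum_fiberwise E Prod.snd (fun e => (a₂ e.2).card), Finset.mul_sum]
      refine Finset.sum_congr rfl fun v _ => ?_
      rw [Finset.sum_congr rfl (fun e he => by
        rw [(Finset.mem_filter.mp he).2]), Finset.sum_const, hreg₂, smul_eq_mul]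
    rw [h1, h2, Nat.mul_add]
  set w : V₁ × V₂ → ℕ := fun e => (a₁ e.1).card + (a₂ e.2).card with hw
  set good : Finset (V₁ × V₂) := E.filter (fun e => w e ≤ ℓ) with hgooddef
  set bad : Finset (V₁ × V₂) := E.filter (fun e => ¬ (w e ≤ ℓ)) with hbaddef
  have hsplit : good.card + bad.card = E.card :=
    Finset.card_filter_add_card_filter_not _
  have hbadsum : (ℓ + 1) * bad.card ≤ ∑ e ∈ E, w e := by
    calc (ℓ+1) * bad.card = ∑ _e ∈ bad, (ℓ+1) := by
          rw [Finset.sum_const, smul_eq_mul, mul_comm]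
      _ ≤ ∑ e ∈ bad, w e := Finset.sum_le_sum (fun e he => by
          have := (Finset.mem_filter.mp he).2; omega)
      _ ≤ ∑ e ∈ E, w e := Finset.sum_le_sum_of_subset (Finset.filter_subset _ _)
  have hbadS : (ℓ + 1) * bad.card ≤ d * S.card := by
    calc (ℓ+1) * bad.card ≤ ∑ e ∈ E, w e := hbadsum
      _ = d * ((∑ u, (a₁ u).card) + (∑ v, (a₂ v).card)) := hEdge
      _ ≤ d * S.card := Nat.mul_le_mul_left _ hSsum
  have hdpos : (1:ℝ) ≤ (d:ℝ) := by exact_mod_cast hd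
  have hℓpos : (1:ℝ) ≤ (ℓ:ℝ) := by exact_mod_cast hℓ
  have hgoodcard : (3 : ℝ)/4 * E.card ≤ good.card := by
    have h1 : ((ℓ:ℝ) + 1) * bad.card ≤ (d:ℝ) * S.card := by exact_mod_cast hbadS
    have h2 : ((E.card : ℝ)) = (Fintype.card V₁ : ℝ) * d := by exact_mod_cast hE₁
    have h3 : ((E.card : ℝ)) = (Fintype.card V₂ : ℝ) * d := by exact_mod_cast hE₂
    have h4 : ((good.card : ℝ)) + bad.card = E.card := by exact_mod_cast hsplit
    push_cast at hsize
    nlinarith [mul_lt_mul_of_pos_left hsize (show (0:ℝ) < d by linarith),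
      (show (0:ℝ) ≤ (bad.card:ℝ) from Nat.cast_nonneg _),
      (show (0:ℝ) ≤ (good.card:ℝ) from Nat.cast_nonneg _)]
  -- witnesses for good edges
  have hwit : ∀ e ∈ good, ∃ y ∈ a₁ e.1, ∃ x ∈ a₂ e.2, π e y = x := by
    intro e he
    obtain ⟨heE, hle⟩ := Finset.mem_filter.mp he
    have hunion : ((⋃ x ∈ (a₂ e.2 : Finset A), C x) ∪
        ⋃ x ∈ ((a₁ e.1).image (π e) : Finset A), (C x)ᶜ) = (Set.univ : Set B) := by
      ext b
      simp only [Set.mem_univ, iff_true, Set.mem_union, Set.mem_iUnion, Set.mem_compl_iff,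
        exists_prop]
      obtain ⟨i, hiS, hib⟩ := hcov e heE b
      obtain ⟨w', c⟩ := i
      cases w' with
      | inl u =>
        have hib' : e ∈ (E : Set (V₁ × V₂)) ∧ e.1 = u ∧ b ∉ C (π e c) := hib
        refine Or.inr ⟨π e c, Finset.mem_image.mpr ⟨c, ?_, rfl⟩, hib'.2.2⟩
        exact Finset.mem_image.mpr ⟨(Sum.inl u, c),
          Finset.mem_filter.mpr ⟨hiS, by rw [hib'.2.1]⟩, rfl⟩
      | inr v =>
        have hib' : e ∈ (E : Set (V₁ × V₂)) ∧ e.2 = v ∧ b ∈ C c := hib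
        refine Or.inl ⟨c, ?_, hib'.2.2⟩
        exact Finset.mem_image.mpr ⟨(Sum.inr v, c),
          Finset.mem_filter.mpr ⟨hiS, by rw [hib'.2.1]⟩, rfl⟩
    obtain ⟨x, hx₂, hxN⟩ := hsys (a₂ e.2) ((a₁ e.1).image (π e))
      (by
        have h5 := Finset.card_image_le (f := π e) (s := a₁ e.1)
        have hle' : (a₁ e.1).card + (a₂ e.2).card ≤ ℓ := hle
        omega) hunion
    obtain ⟨y, hy₁, hyx⟩ := Finset.mem_image.mp hxN
    exact ⟨y, hy₁, x, hx₂, hyx⟩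
  choose! y₀ hy₀ x₀ hx₀ hyx₀ using hwit
  set b₁ : V₁ → Finset A := fun u => if (a₁ u).Nonempty then a₁ u else Finset.univ with hb₁def
  set b₂ : V₂ → Finset A := fun v => if (a₂ v).Nonempty then a₂ v else Finset.univ with hb₂def
  have hb₁ne : ∀ u, (b₁ u).Nonempty := fun u => by
    by_cases h : (a₁ u).Nonempty <;> simp [hb₁def, h, Finset.univ_nonempty]
  have hb₂ne : ∀ v, (b₂ v).Nonempty := fun v => by
    by_cases h : (a₂ v).Nonempty <;> simp [hb₂def, h, Finset.univ_nonempty]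
  have hb₁eq : ∀ e ∈ good, b₁ e.1 = a₁ e.1 := fun e he =>
    if_pos ⟨y₀ e, hy₀ e he⟩
  have hb₂eq : ∀ e ∈ good, b₂ e.2 = a₂ e.2 := fun e he =>
    if_pos ⟨x₀ e, hx₀ e he⟩
  set D : Finset ((V₁ → A) × (V₂ → A)) := (Fintype.piFinset b₁) ×ˢ (Fintype.piFinset b₂)
    with hDdef
  have hDne : D.Nonempty := Finset.Nonempty.product
    (Fintype.piFinset_nonempty.mpr hb₁ne) (Fintype.piFinset_nonempty.mpr hb₂ne)
  have hkey : ∀ e ∈ good, D.card ≤ ((a₁ e.1).card * (a₂ e.2).card) *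
      (D.filter fun p => π e (p.1 e.1) = p.2 e.2).card := by
    intro e he
    set F : ((V₁ → A) × (V₂ → A)) → ((V₁ → A) × (V₂ → A)) :=
      fun p => (Function.update p.1 e.1 (y₀ e), Function.update p.2 e.2 (x₀ e)) with hF
    have himg : D.image F ⊆ D.filter fun p => π e (p.1 e.1) = p.2 e.2 := by
      intro q hq
      obtain ⟨p, hp, rfl⟩ := Finset.mem_image.mp hq
      obtain ⟨hp1, hp2⟩ := Finset.mem_product.mp hp
      refine Finset.mem_filter.mpr ⟨Finset.mem_product.mpr ⟨?_, ?_⟩, ?_⟩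
      · simp only [hF]
        rw [Fintype.mem_piFinset]; intro u
        rcases eq_or_ne u e.1 with h | hne
        · subst h
          rw [Function.update_self, hb₁eq e he]
          exact hy₀ e he
        · rw [Function.update_of_ne hne]
          exact Fintype.mem_piFinset.mp hp1 u
      · simp only [hF]
        rw [Fintype.mem_piFinset]; intro v
        rcases eq_or_ne v e.2 with h | hne
        · subst h
          rw [Function.update_self, hb₂eq e he]
          exact hx₀ e he
        · rw [Function.update_of_ne hne]
          exact Fintype.mem_piFinset.mp hp2 v
      · simp only [hF]
        rw [Function.update_self, Function.update_self]
        exact hyx₀ e he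
    have hfib : ∀ q ∈ D.image F,
        (D.filter fun p => F p = q).card ≤ (a₁ e.1).card * (a₂ e.2).card := by
      intro q _
      rw [← Finset.card_product]
      apply Finset.card_le_card_of_injOn (fun p => (p.1 e.1, p.2 e.2))
      · intro p hp
        obtain ⟨hpD, _⟩ := Finset.mem_filter.mp hp
        obtain ⟨hp1, hp2⟩ := Finset.mem_product.mp hpD
        rw [Finset.mem_coe, Finset.mem_product]
        constructor
        · have h := Fintype.mem_piFinset.mp hp1 e.1; rwa [hb₁eq e he] at h
        · have h := Fintype.mem_piFinset.mp hp2 e.2; rwa [hb₂eq e he] at h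
      · intro p hp p' hp' hpp
        simp only [Finset.coe_filter, Set.mem_setOf_eq] at hp hp'
        have hq : F p = F p' := hp.2.trans hp'.2.symm
        have h1 : p.1 = p'.1 := by
          funext u
          rcases eq_or_ne u e.1 with rfl | hne
          · exact congrArg Prod.fst hpp
          · have h := congrFun (congrArg Prod.fst hq) u
            simp only [hF] at h
            rwa [Function.update_of_ne hne, Function.update_of_ne hne] at h
        have h2 : p.2 = p'.2 := by
          funext v
          rcases eq_or_ne v e.2 with rfl | hne
          · exact congrArg Prod.snd hpp
          · have h := congrFun (congrArg Prod.snd hq) v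
            simp only [hF] at h
            rwa [Function.update_of_ne hne, Function.update_of_ne hne] at h
        exact Prod.ext h1 h2
    calc D.card ≤ ((a₁ e.1).card * (a₂ e.2).card) * (D.image F).card :=
          Finset.card_le_mul_card_image D _ hfib
      _ ≤ _ := Nat.mul_le_mul_left _ (Finset.card_le_card himg)
  have hswap : ∑ p ∈ D, (E.filter fun e => π e (p.1 e.1) = p.2 e.2).card
      = ∑ e ∈ E, (D.filter fun p => π e (p.1 e.1) = p.2 e.2).card := by
    simp_rw [Finset.card_filter]
    exact Finset.sum_comm
  have hℓ2 : (0:ℝ) < (ℓ:ℝ)^2 := by nlinarith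
  have hper : ∀ e ∈ good, 4 / (ℓ:ℝ)^2 * D.card ≤
      ((D.filter fun p => π e (p.1 e.1) = p.2 e.2).card : ℝ) := by
    intro e he
    have hk : (D.card : ℝ) ≤ (((a₁ e.1).card : ℝ) * ((a₂ e.2).card : ℝ)) *
        ((D.filter fun p => π e (p.1 e.1) = p.2 e.2).card : ℝ) := by
      exact_mod_cast hkey e he
    have hle : (a₁ e.1).card + (a₂ e.2).card ≤ ℓ := (Finset.mem_filter.mp he).2
    have hle' : ((a₁ e.1).card : ℝ) + ((a₂ e.2).card : ℝ) ≤ (ℓ:ℝ) := by exact_mod_cast hle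
    have hm : ((a₁ e.1).card : ℝ) * ((a₂ e.2).card : ℝ) ≤ (ℓ:ℝ)^2/4 := by
      nlinarith [sq_nonneg (((a₁ e.1).card : ℝ) - ((a₂ e.2).card : ℝ)),
        (show (0:ℝ) ≤ ((a₁ e.1).card : ℝ) from Nat.cast_nonneg _),
        (show (0:ℝ) ≤ ((a₂ e.2).card : ℝ) from Nat.cast_nonneg _)]
    have hN : (0:ℝ) ≤ ((D.filter fun p => π e (p.1 e.1) = p.2 e.2).card : ℝ) :=
      Nat.cast_nonneg _
    rw [div_mul_eq_mul_div, div_le_iff₀ hℓ2]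
    nlinarith [mul_le_mul_of_nonneg_right hm hN]
  have hTlow : (good.card : ℝ) * (4/(ℓ:ℝ)^2 * D.card) ≤
      ∑ e ∈ E, ((D.filter fun p => π e (p.1 e.1) = p.2 e.2).card : ℝ) := by
    calc (good.card:ℝ) * (4/(ℓ:ℝ)^2 * D.card)
        = ∑ _e ∈ good, (4/(ℓ:ℝ)^2 * (D.card:ℝ)) := by
          rw [Finset.sum_const, nsmul_eq_mul]
      _ ≤ ∑ e ∈ good, ((D.filter fun p => π e (p.1 e.1) = p.2 e.2).card : ℝ) :=
          Finset.sum_le_sum hper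
      _ ≤ ∑ e ∈ E, ((D.filter fun p => π e (p.1 e.1) = p.2 e.2).card : ℝ) :=
          Finset.sum_le_sum_of_subset_of_nonneg (Finset.filter_subset _ _)
            (fun _ _ _ => Nat.cast_nonneg _)
  have havg : ∃ p ∈ D, (good.card:ℝ) * (4/(ℓ:ℝ)^2) ≤
      ((E.filter fun e => π e (p.1 e.1) = p.2 e.2).card : ℝ) := by
    refine Finset.exists_le_of_sum_le
      (f := fun _ : (V₁ → A) × (V₂ → A) => (good.card:ℝ) * (4/(ℓ:ℝ)^2))
      (g := fun p => ((E.filter fun e => π e (p.1 e.1) = p.2 e.2).card : ℝ)) hDne ?_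
    rw [Finset.sum_const, nsmul_eq_mul]
    have hc : ∑ p ∈ D, ((E.filter fun e => π e (p.1 e.1) = p.2 e.2).card : ℝ)
        = ∑ e ∈ E, ((D.filter fun p => π e (p.1 e.1) = p.2 e.2).card : ℝ) := by
      exact_mod_cast hswap
    rw [hc]
    nlinarith [hTlow]
  obtain ⟨p, _, hp⟩ := havg
  refine ⟨p.1, p.2, ?_⟩
  have hE0 : (0:ℝ) ≤ (E.card : ℝ) := Nat.cast_nonneg _
  have hfinal : 2/(ℓ:ℝ)^2 * (E.card:ℝ) ≤ (good.card:ℝ) * (4/(ℓ:ℝ)^2) := by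
    rw [div_mul_eq_mul_div, mul_comm (good.card:ℝ), div_mul_eq_mul_div,
      div_le_div_iff₀ hℓ2 hℓ2]
    nlinarith [hgoodcard]
  linarith
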